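/- Let p be a prime, n ≥ 1 coprime to p, and G = C_n × C_p × C_p. Then the vertex connectivity of Δ(G) equals φ(|G|) = φ(n)·(p² − p), which is the minimal degree of Δ(G). -/

import Mathlib

set_option linter.unusedSectionVars false

open SimpleGraph

/-- The generating graph of a group: `g ~ h` iff `g ≠ h` and `⟨g,h⟩ = G`. -/
def genGraph (G : Type*) [Group G] : SimpleGraph G where
  Adj g h := g ≠ h ∧ Subgroup.closure {g, h} = ⊤
  symm := ⟨by
    rintro g h ⟨hne, hgen⟩
    exact ⟨hne.symm, by rwa [Set.pair_comm]⟩⟩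
  loopless := ⟨fun g h => h.1 rfl⟩

/-- A group is 2-generated if it is generated by two elements. -/
def TwoGenerated (G : Type*) [Group G] : Prop :=
  ∃ x y : G, Subgroup.closure {x, y} = ⊤

/-- The set of non-isolated vertices of the generating graph. -/
def nonIso (G : Type*) [Group G] : Set G := {g | ∃ h, (genGraph G).Adj g h}

/-- `Δ(G)`: the generating graph with isolated vertices removed. -/
def deltaGraph (G : Type*) [Group G] : SimpleGraph (nonIso G) :=
  (genGraph G).induce (nonIso G)

set_option linter.unusedSectionVars false

theorem closure_top_iff' {A : Type*} [AddCommGroup A] (S : Set (Multiplicative A)) :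
    Subgroup.closure S = ⊤ ↔ AddSubgroup.closure (Multiplicative.toAdd '' S) = ⊤ := by
  constructor
  · intro h
    rw [eq_top_iff]
    intro z _
    have hz : Multiplicative.ofAdd z ∈ Subgroup.closure S := h ▸ trivial
    refine Subgroup.closure_induction
      (p := fun x _ => Multiplicative.toAdd x ∈ AddSubgroup.closure (Multiplicative.toAdd '' S))
      ?_ ?_ ?_ ?_ hz
    · intro x hx; exact AddSubgroup.subset_closure ⟨x, hx, rfl⟩
    · exact AddSubgroup.zero_mem _
    · intro x y _ _ hx hy; exact AddSubgroup.add_mem _ hx hy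
    · intro x _ hx; exact AddSubgroup.neg_mem _ hx
  · intro h
    rw [eq_top_iff]
    intro z _
    have hz : Multiplicative.toAdd z ∈ AddSubgroup.closure (Multiplicative.toAdd '' S) :=
      h ▸ trivial
    refine AddSubgroup.closure_induction
      (p := fun x _ => Multiplicative.ofAdd x ∈ Subgroup.closure S) ?_ ?_ ?_ ?_ hz
    · rintro x ⟨y, hy, rfl⟩; exact Subgroup.subset_closure hy
    · exact Subgroup.one_mem _
    · intro x y _ _ hx hy; exact Subgroup.mul_mem _ hx hy
    · intro x _ hx; exact Subgroup.inv_mem _ hx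


section
variable (p : ℕ) [Fact p.Prime]

theorem add_closure_eq_span (S : Set (ZMod p × ZMod p)) :
    AddSubgroup.closure S = ⊤ ↔ Submodule.span (ZMod p) S = ⊤ := by
  constructor
  · intro h
    rw [eq_top_iff]
    intro z _
    have hz : z ∈ AddSubgroup.closure S := h ▸ trivial
    refine AddSubgroup.closure_induction (p := fun x _ => x ∈ Submodule.span (ZMod p) S)
      ?_ ?_ ?_ ?_ hz
    · exact fun x hx => Submodule.subset_span hx
    · exact Submodule.zero_mem _
    · exact fun x y _ _ hx hy => Submodule.add_mem _ hx hy
    · exact fun x _ hx => Submodule.neg_mem _ hx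
  · intro h
    rw [eq_top_iff]
    intro z _
    have hz : z ∈ Submodule.span (ZMod p) S := h ▸ trivial
    refine Submodule.span_induction ?_ ?_ ?_ ?_ hz
    · exact fun x hx => AddSubgroup.subset_closure hx
    · exact AddSubgroup.zero_mem _
    · exact fun x y _ _ hx hy => AddSubgroup.add_mem _ hx hy
    · intro c x _ hx
      show c • x ∈ AddSubgroup.closure S
      have : c • x = c.val • x := by
        rw [← Nat.cast_smul_eq_nsmul (ZMod p), ZMod.natCast_val, ZMod.cast_id]
      rw [this]
      exact AddSubgroup.nsmul_mem _ hx _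
end

section
variable (n p : ℕ) [NeZero n] [Fact p.Prime]

abbrev Vp (p : ℕ) := ZMod p × ZMod p
abbrev Ap (n p : ℕ) := ZMod n × Vp p

theorem prod_closure_top_iff (hcop : Nat.Coprime n p) (x y : ZMod n) (v w : Vp p) :
    AddSubgroup.closure {((x, v) : Ap n p), (y, w)} = ⊤ ↔
      AddSubgroup.closure {x, y} = ⊤ ∧ Submodule.span (ZMod p) {v, w} = ⊤ := by
  constructor
  · intro h
    constructor
    · have := congrArg (AddSubgroup.map (AddMonoidHom.fst (ZMod n) (Vp p))) h
      rw [AddMonoidHom.map_closure] at this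
      rw [Set.image_pair] at this
      simp only [AddMonoidHom.coe_fst] at this
      rw [eq_top_iff]
      intro t _
      have ht : ((t, 0) : Ap n p) ∈ (⊤ : AddSubgroup (Ap n p)) := trivial
      have := this ▸ (AddSubgroup.mem_map.mpr ⟨(t, 0), trivial, rfl⟩ :
        t ∈ AddSubgroup.map (AddMonoidHom.fst (ZMod n) (Vp p)) ⊤)
      exact this
    · rw [← add_closure_eq_span]
      have := congrArg (AddSubgroup.map (AddMonoidHom.snd (ZMod n) (Vp p))) h
      rw [AddMonoidHom.map_closure, Set.image_pair] at this
      simp only [AddMonoidHom.coe_snd] at this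
      rw [eq_top_iff]
      intro t _
      exact this ▸ (AddSubgroup.mem_map.mpr ⟨(0, t), trivial, rfl⟩ :
        t ∈ AddSubgroup.map (AddMonoidHom.snd (ZMod n) (Vp p)) ⊤)
  · rintro ⟨h1, h2⟩
    set H := AddSubgroup.closure {((x, v) : Ap n p), (y, w)} with hH
    have hg : ((x, v) : Ap n p) ∈ H := AddSubgroup.subset_closure (by simp)
    have hh : ((y, w) : Ap n p) ∈ H := AddSubgroup.subset_closure (by simp)
    -- get coprime combination
    have hic : IsCoprime (n : ℤ) (p : ℤ) := by
      rw [Int.isCoprime_iff_gcd_eq_one]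
      exact_mod_cast hcop
    obtain ⟨a, b, hab⟩ := hic
    -- e := b*p : ≡ 1 mod n, ≡ 0 mod p ; f := a*n : ≡ 0 mod n, ≡ 1 mod p
    have hen : ((b * p : ℤ) : ZMod n) = 1 := by
      have : ((a * n + b * p : ℤ) : ZMod n) = 1 := by rw [hab]; simp
      simpa using this
    have hep : ((b * p : ℤ) : ZMod p) = 0 := by push_cast; simp
    have hfp : ((a * n : ℤ) : ZMod p) = 1 := by
      have : ((a * n + b * p : ℤ) : ZMod p) = 1 := by rw [hab]; simp
      simpa using this
    have hfn : ((a * n : ℤ) : ZMod n) = 0 := by push_cast; simp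
    have smul_fst : ∀ (k : ℤ) (g : Ap n p), (k • g) = (k • g.1, k • g.2) := fun k g => rfl
    have zsmul_zmod : ∀ (m : ℕ) (k : ℤ) (t : ZMod m), k • t = (k : ZMod m) * t :=
      fun m k t => by rw [zsmul_eq_mul]
    have he_smul : ∀ (x' : ZMod n) (v' : Vp p), (b * p : ℤ) • ((x', v') : Ap n p) = (x', 0) := by
      intro x' v'
      rw [smul_fst]
      refine Prod.ext ?_ ?_
      · simp only [zsmul_zmod, hen, one_mul]
      · show (b*p : ℤ) • v' = (0 : Vp p)
        refine Prod.ext ?_ ?_ <;>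
          simp [zsmul_zmod, hep]
    have hf_smul : ∀ (x' : ZMod n) (v' : Vp p), (a * n : ℤ) • ((x', v') : Ap n p) = (0, v') := by
      intro x' v'
      rw [smul_fst]
      refine Prod.ext ?_ ?_
      · simp only [zsmul_zmod, hfn, zero_mul]
      · show (a*n : ℤ) • v' = v'
        refine Prod.ext ?_ ?_ <;>
          simp [zsmul_zmod, ← Int.cast_mul, hfp]
    have hx0 : ((x, 0) : Ap n p) ∈ H := he_smul x v ▸ AddSubgroup.zsmul_mem _ hg _
    have hy0 : ((y, 0) : Ap n p) ∈ H := he_smul y w ▸ AddSubgroup.zsmul_mem _ hh _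
    have h0v : ((0, v) : Ap n p) ∈ H := hf_smul x v ▸ AddSubgroup.zsmul_mem _ hg _
    have h0w : ((0, w) : Ap n p) ∈ H := hf_smul y w ▸ AddSubgroup.zsmul_mem _ hh _
    have hinl : ∀ t : ZMod n, ((t, 0) : Ap n p) ∈ H := by
      intro t
      have : AddSubgroup.closure {x, y} ≤
          AddSubgroup.comap (AddMonoidHom.inl (ZMod n) (Vp p)) H := by
        rw [AddSubgroup.closure_le]
        rintro z (rfl | rfl)
        · exact hx0
        · exact hy0
      exact this (h1 ▸ trivial)
    have hinr : ∀ u : Vp p, ((0, u) : Ap n p) ∈ H := by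
      intro u
      have h2' : AddSubgroup.closure {v, w} = ⊤ := (add_closure_eq_span p _).mpr h2
      have : AddSubgroup.closure {v, w} ≤
          AddSubgroup.comap (AddMonoidHom.inr (ZMod n) (Vp p)) H := by
        rw [AddSubgroup.closure_le]
        rintro z (rfl | rfl)
        · exact h0v
        · exact h0w
      exact this (h2' ▸ trivial)
    rw [eq_top_iff]
    intro z _
    have : z = ((z.1, 0) : Ap n p) + (0, z.2) := by simp
    rw [this]
    exact AddSubgroup.add_mem _ (hinl z.1) (hinr z.2)
end


variable (p : ℕ) [Fact p.Prime]



theorem finrank_Vp : Module.finrank (ZMod p) (Vp p) = 2 := by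
  rw [Module.finrank_prod, Module.finrank_self]

theorem span_singleton_card {v : Vp p} (hv : v ≠ 0) :
    Nat.card (Submodule.span (ZMod p) {v} : Submodule (ZMod p) (Vp p)) = p := by
  have : (Submodule.span (ZMod p) {v} : Submodule (ZMod p) (Vp p)) ≃ ZMod p := by
    refine (Equiv.ofBijective (fun c : ZMod p => ⟨c • v, Submodule.smul_mem _ c
      (Submodule.mem_span_singleton_self v)⟩) ⟨?_, ?_⟩).symm
    · intro c c' h
      have h' : c • v = c' • v := congrArg Subtype.val h
      by_contra hne
      have : (c - c') • v = 0 := by rw [sub_smul, h', sub_self]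
      rcases smul_eq_zero.mp this with h0 | h0
      · exact hne (sub_eq_zero.mp h0)
      · exact hv h0
    · rintro ⟨z, hz⟩
      obtain ⟨c, hc⟩ := Submodule.mem_span_singleton.mp hz
      exact ⟨c, Subtype.ext hc⟩
  rw [Nat.card_congr this, Nat.card_zmod]

theorem card_Vp : Nat.card (Vp p) = p ^ 2 := by
  simp [Nat.card_prod, Nat.card_zmod, sq]

theorem span_singleton_ne_top {v : Vp p} : Submodule.span (ZMod p) {v} ≠ ⊤ := by
  have hp := (Fact.out : p.Prime).one_lt
  intro h
  rcases eq_or_ne v 0 with rfl | hv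
  · rw [Submodule.span_zero_singleton] at h
    have h1 : ((1,0) : Vp p) ∈ (⊥ : Submodule (ZMod p) (Vp p)) := h ▸ trivial
    rw [Submodule.mem_bot] at h1
    have : (1 : ZMod p) = 0 := congrArg Prod.fst h1
    exact one_ne_zero this
  · have := span_singleton_card p hv
    rw [h] at this
    have h2 : Nat.card (⊤ : Submodule (ZMod p) (Vp p)) = p ^ 2 := by
      rw [← card_Vp p]
      exact Nat.card_congr (Equiv.Set.univ _)
    rw [this] at h2
    nlinarith

theorem span_pair_top_iff {v : Vp p} (hv : v ≠ 0) (w : Vp p) :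
    Submodule.span (ZMod p) {v, w} = ⊤ ↔ w ∉ Submodule.span (ZMod p) {v} := by
  constructor
  · intro h hw
    apply span_singleton_ne_top p (v := v)
    rw [eq_top_iff, ← h, Submodule.span_le]
    rintro z (rfl | rfl)
    · exact Submodule.mem_span_singleton_self _
    · exact hw
  · intro hw
    have hli : LinearIndependent (ZMod p) ![v, w] := by
      rw [LinearIndependent.pair_iff' hv]
      intro a ha
      exact hw (ha ▸ Submodule.smul_mem _ a (Submodule.mem_span_singleton_self v))
    have := hli.span_eq_top_of_card_eq_finrank (by simp [finrank_Vp])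
    have hr : Set.range ![v, w] = {v, w} := by
      ext z
      simp [Fin.exists_fin_two]
      tauto
    rw [← this, hr]


variable (n : ℕ) [NeZero n]

theorem closure_singleton_top_iff (y : ZMod n) :
    AddSubgroup.closure {y} = ⊤ ↔ IsUnit y := by
  constructor
  · intro h
    have h1 : (1 : ZMod n) ∈ AddSubgroup.closure {y} := h ▸ trivial
    obtain ⟨k, hk⟩ := AddSubgroup.mem_closure_singleton.mp h1
    rw [zsmul_eq_mul] at hk
    exact IsUnit.of_mul_eq_one (k : ZMod n) (by rw [mul_comm]; exact hk)
  · intro hy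
    obtain ⟨u, rfl⟩ := hy
    rw [eq_top_iff]
    intro t _
    refine AddSubgroup.mem_closure_singleton.mpr ⟨((t * ↑u⁻¹ : ZMod n).val : ℤ), ?_⟩
    rw [zsmul_eq_mul]
    push_cast
    rw [ZMod.natCast_val, ZMod.cast_id, mul_assoc]
    simp
theorem closure_pair_zero_iff (y : ZMod n) :
    AddSubgroup.closure {(0 : ZMod n), y} = ⊤ ↔ IsUnit y := by
  rw [← closure_singleton_top_iff]
  constructor
  · intro h
    rw [eq_top_iff, ← h, AddSubgroup.closure_le]
    rintro z (rfl | rfl)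
    · exact AddSubgroup.zero_mem _
    · exact AddSubgroup.subset_closure rfl
  · intro h
    rw [eq_top_iff, ← h]
    exact AddSubgroup.closure_mono (by simp)
theorem closure_pair_of_isUnit (x y : ZMod n) (hy : IsUnit y) :
    AddSubgroup.closure {x, y} = ⊤ := by
  rw [eq_top_iff, ← (closure_singleton_top_iff n y).mpr hy]
  exact AddSubgroup.closure_mono (by simp)
theorem card_isUnit : Nat.card {y : ZMod n | IsUnit y} = n.totient := by
  have e : (ZMod n)ˣ ≃ {y : ZMod n | IsUnit y} := by
    refine Equiv.ofBijective (fun u => ⟨u, u.isUnit⟩) ⟨?_, ?_⟩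
    · intro u u' h
      exact Units.ext (congrArg Subtype.val h)
    · rintro ⟨y, hy⟩
      exact ⟨hy.unit, rfl⟩
  rw [← Nat.card_congr e, Nat.card_eq_fintype_card, ZMod.card_units_eq_totient]

section Graph
variable (n p : ℕ) [NeZero n] [Fact p.Prime]

abbrev Gnp (n p : ℕ) := Multiplicative (Ap n p)

def xc {n p : ℕ} (g : Gnp n p) : ZMod n := (Multiplicative.toAdd g).1
def vc {n p : ℕ} (g : Gnp n p) : Vp p := (Multiplicative.toAdd g).2

theorem toAdd_eq {n p : ℕ} (g : Gnp n p) : Multiplicative.toAdd g = ((xc g, vc g) : Ap n p) := rfl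

theorem gnp_ext {n p : ℕ} {g h : Gnp n p} (h1 : xc g = xc h) (h2 : vc g = vc h) : g = h := by
  have : Multiplicative.toAdd g = Multiplicative.toAdd h := by
    rw [toAdd_eq, toAdd_eq, h1, h2]
  exact Multiplicative.toAdd.injective this

theorem genAdj_iff (hcop : Nat.Coprime n p) (g h : Gnp n p) :
    (genGraph (Gnp n p)).Adj g h ↔
      g ≠ h ∧ AddSubgroup.closure {xc g, xc h} = ⊤ ∧
        Submodule.span (ZMod p) {vc g, vc h} = ⊤ := by
  show (g ≠ h ∧ Subgroup.closure {g, h} = ⊤) ↔ _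
  rw [closure_top_iff', Set.image_pair, toAdd_eq g, toAdd_eq h,
    prod_closure_top_iff n p hcop]

theorem exists_notMem_span (v : Vp p) : ∃ w, w ∉ Submodule.span (ZMod p) {v} := by
  by_contra hc
  push_neg at hc
  exact span_singleton_ne_top p (Submodule.eq_top_iff'.mpr hc)

theorem span_pair_zero (w : Vp p) :
    Submodule.span (ZMod p) {(0 : Vp p), w} = Submodule.span (ZMod p) {w} := by
  rw [show ({(0 : Vp p), w} : Set (Vp p)) = insert 0 {w} from rfl, Submodule.span_insert_zero]

theorem mem_nonIso_iff (hcop : Nat.Coprime n p) (g : Gnp n p) :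
    g ∈ nonIso (Gnp n p) ↔ vc g ≠ 0 := by
  constructor
  · rintro ⟨h, hadj⟩
    rw [genAdj_iff n p hcop] at hadj
    intro h0
    rw [h0, span_pair_zero] at hadj
    exact span_singleton_ne_top p hadj.2.2
  · intro hv
    obtain ⟨w, hw⟩ := exists_notMem_span p (vc g)
    refine ⟨Multiplicative.ofAdd ((1 : ZMod n), w), ?_⟩
    rw [genAdj_iff n p hcop]
    refine ⟨?_, ?_, ?_⟩
    · intro he
      apply hw
      have : vc g = w := congrArg vc he
      rw [← this]
      exact Submodule.mem_span_singleton_self _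
    · exact closure_pair_of_isUnit n _ _ isUnit_one
    · exact (span_pair_top_iff p hv w).mpr hw

theorem deltaAdj_iff (hcop : Nat.Coprime n p) (u z : nonIso (Gnp n p)) :
    (deltaGraph (Gnp n p)).Adj u z ↔
      AddSubgroup.closure {xc u.val, xc z.val} = ⊤ ∧
        vc z.val ∉ Submodule.span (ZMod p) {vc u.val} := by
  have hu : vc u.val ≠ 0 := (mem_nonIso_iff n p hcop u.val).mp u.prop
  show (genGraph (Gnp n p)).Adj u.val z.val ↔ _
  rw [genAdj_iff n p hcop, ← span_pair_top_iff p hu (vc z.val)]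
  constructor
  · tauto
  · rintro ⟨h1, h2⟩
    refine ⟨?_, h1, h2⟩
    intro he
    rw [(span_pair_top_iff p hu (vc z.val))] at h2
    apply h2
    rw [← congrArg vc he]
    exact Submodule.mem_span_singleton_self _

end Graph

section Count
open scoped Classical
variable (n p : ℕ) [NeZero n] [Fact p.Prime]

theorem card_lift (P : Gnp n p → Prop) (hP : ∀ g, P g → g ∈ nonIso (Gnp n p)) :
    Nat.card {u : nonIso (Gnp n p) | P u.val} = Nat.card {g : Gnp n p | P g} := by
  apply Nat.card_congr
  exact ⟨fun u => ⟨u.val.val, u.prop⟩, fun g => ⟨⟨g.val, hP g.val g.prop⟩, g.prop⟩,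
    fun u => rfl, fun g => rfl⟩

theorem card_cond (Q1 : ZMod n → Prop) (Q2 : Vp p → Prop) :
    Nat.card {g : Gnp n p | Q1 (xc g) ∧ Q2 (vc g)} =
      Nat.card {y | Q1 y} * Nat.card {w | Q2 w} := by
  have e1 : {g : Gnp n p | Q1 (xc g) ∧ Q2 (vc g)} ≃
      ({y | Q1 y} ×ˢ {w | Q2 w} : Set (Ap n p)) :=
    (Multiplicative.toAdd (α := Ap n p)).subtypeEquiv (fun g => Iff.rfl)
  rw [Nat.card_congr e1, Nat.card_congr (Equiv.Set.prod _ _), Nat.card_prod]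

theorem card_notin_span {v : Vp p} (hv : v ≠ 0) :
    Nat.card {w : Vp p | w ∉ Submodule.span (ZMod p) {v}} = p ^ 2 - p := by
  have hple : p ≤ p ^ 2 := by nlinarith [(Fact.out : p.Prime).one_lt]
  have hs : (↑(Submodule.span (ZMod p) {v}) : Set (Vp p)).ncard = p := by
    rw [← Nat.card_coe_set_eq]
    exact span_singleton_card p hv
  have hcompl := Set.ncard_add_ncard_compl
    (↑(Submodule.span (ZMod p) {v}) : Set (Vp p))
  rw [hs, card_Vp] at hcompl
  have : {w : Vp p | w ∉ Submodule.span (ZMod p) {v}} =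
      (↑(Submodule.span (ZMod p) {v}) : Set (Vp p))ᶜ := rfl
  rw [this, Nat.card_coe_set_eq]
  omega

theorem card_T1_zero :
    Nat.card {y : ZMod n | AddSubgroup.closure {(0 : ZMod n), y} = ⊤} = n.totient := by
  have : {y : ZMod n | AddSubgroup.closure {(0 : ZMod n), y} = ⊤} = {y : ZMod n | IsUnit y} := by
    ext y; exact closure_pair_zero_iff n y
  rw [this, card_isUnit n]

theorem card_T1_ge (x : ZMod n) :
    n.totient ≤ Nat.card {y : ZMod n | AddSubgroup.closure {x, y} = ⊤} := by
  rw [← card_isUnit n, Nat.card_coe_set_eq, Nat.card_coe_set_eq]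
  exact Set.ncard_le_ncard (fun y hy => closure_pair_of_isUnit n x y hy) (Set.toFinite _)

theorem neighborSet_eq (hcop : Nat.Coprime n p) (u : nonIso (Gnp n p)) :
    (deltaGraph (Gnp n p)).neighborSet u =
      {z : nonIso (Gnp n p) | AddSubgroup.closure {xc u.val, xc z.val} = ⊤ ∧
        vc z.val ∉ Submodule.span (ZMod p) {vc u.val}} := by
  ext z; exact deltaAdj_iff n p hcop u z

theorem card_neighborSet (hcop : Nat.Coprime n p) (u : nonIso (Gnp n p)) :
    Nat.card ((deltaGraph (Gnp n p)).neighborSet u) =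
      Nat.card {y : ZMod n | AddSubgroup.closure {xc u.val, y} = ⊤} * (p ^ 2 - p) := by
  have hv : vc u.val ≠ 0 := (mem_nonIso_iff n p hcop u.val).mp u.prop
  rw [neighborSet_eq n p hcop u]
  rw [card_lift n p (fun g => AddSubgroup.closure {xc u.val, xc g} = ⊤ ∧
      vc g ∉ Submodule.span (ZMod p) {vc u.val}) ?_]
  · rw [card_cond n p (fun y => AddSubgroup.closure {xc u.val, y} = ⊤)
      (fun w => w ∉ Submodule.span (ZMod p) {vc u.val})]
    rw [card_notin_span p hv]
  · intro g hg
    rw [mem_nonIso_iff n p hcop]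
    intro h0
    exact hg.2 (h0 ▸ Submodule.zero_mem _)

theorem degree_eq (hcop : Nat.Coprime n p) (u : nonIso (Gnp n p)) :
    (deltaGraph (Gnp n p)).degree u =
      Nat.card {y : ZMod n | AddSubgroup.closure {xc u.val, y} = ⊤} * (p ^ 2 - p) := by
  rw [← card_neighborSet n p hcop u, Nat.card_eq_fintype_card,
    SimpleGraph.card_neighborSet_eq_degree]

def u₀ (hcop : Nat.Coprime n p) : nonIso (Gnp n p) :=
  ⟨Multiplicative.ofAdd ((0 : ZMod n), ((1 : ZMod p), (0 : ZMod p))), by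
    haveI : Fact (1 < p) := ⟨(Fact.out : p.Prime).one_lt⟩
    rw [mem_nonIso_iff n p hcop]
    intro h
    exact one_ne_zero (congrArg Prod.fst h)⟩

theorem degree_u₀ (hcop : Nat.Coprime n p) :
    (deltaGraph (Gnp n p)).degree (u₀ n p hcop) = n.totient * (p ^ 2 - p) := by
  rw [degree_eq n p hcop]
  congr 1
  have : xc (u₀ n p hcop).val = 0 := rfl
  rw [this, card_T1_zero]

theorem minDegree_ge (hcop : Nat.Coprime n p) (u : nonIso (Gnp n p)) :
    n.totient * (p ^ 2 - p) ≤ (deltaGraph (Gnp n p)).degree u := by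
  rw [degree_eq n p hcop]
  exact Nat.mul_le_mul_right _ (card_T1_ge n (xc u.val))

theorem minDegree_eq (hcop : Nat.Coprime n p) :
    (deltaGraph (Gnp n p)).minDegree = n.totient * (p ^ 2 - p) := by
  haveI : Nonempty (nonIso (Gnp n p)) := ⟨u₀ n p hcop⟩
  refine le_antisymm ?_ ?_
  · rw [← degree_u₀ n p hcop]
    exact SimpleGraph.minDegree_le_degree _ _
  · exact SimpleGraph.le_minDegree_of_forall_le_degree _ _ (minDegree_ge n p hcop)

end Count

section Conn
open scoped Classical
variable (n p : ℕ) [NeZero n] [Fact p.Prime]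

theorem card_unitSet (hcop : Nat.Coprime n p) (u : nonIso (Gnp n p)) :
    Nat.card {z : nonIso (Gnp n p) | IsUnit (xc z.val) ∧
        vc z.val ∉ Submodule.span (ZMod p) {vc u.val}} = n.totient * (p ^ 2 - p) := by
  have hv : vc u.val ≠ 0 := (mem_nonIso_iff n p hcop u.val).mp u.prop
  rw [card_lift n p (fun g => IsUnit (xc g) ∧ vc g ∉ Submodule.span (ZMod p) {vc u.val}) ?_]
  · rw [card_cond n p (fun y => IsUnit y) (fun w => w ∉ Submodule.span (ZMod p) {vc u.val}),
      card_isUnit n, card_notin_span p hv]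
  · intro g hg
    rw [mem_nonIso_iff n p hcop]
    intro h0
    exact hg.2 (h0 ▸ Submodule.zero_mem _)

theorem exists_good (hcop : Nat.Coprime n p) (X : Set (nonIso (Gnp n p)))
    (hX : X.ncard < n.totient * (p ^ 2 - p)) (u : nonIso (Gnp n p)) :
    ∃ z : nonIso (Gnp n p), IsUnit (xc z.val) ∧
      vc z.val ∉ Submodule.span (ZMod p) {vc u.val} ∧ z ∉ X := by
  by_contra hc
  push_neg at hc
  set S := {z : nonIso (Gnp n p) | IsUnit (xc z.val) ∧
      vc z.val ∉ Submodule.span (ZMod p) {vc u.val}} with hS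
  have hsub : S ⊆ X := fun z hz => hc z hz.1 hz.2
  have : S.ncard ≤ X.ncard := Set.ncard_le_ncard hsub (Set.toFinite _)
  have hcard : S.ncard = n.totient * (p ^ 2 - p) := by
    rw [← Nat.card_coe_set_eq, hS, card_unitSet n p hcop u]
  omega

theorem adj_of_good (hcop : Nat.Coprime n p) (u z : nonIso (Gnp n p))
    (h1 : IsUnit (xc z.val)) (h2 : vc z.val ∉ Submodule.span (ZMod p) {vc u.val}) :
    (deltaGraph (Gnp n p)).Adj u z := by
  rw [deltaAdj_iff n p hcop]
  exact ⟨closure_pair_of_isUnit n _ _ h1, h2⟩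

theorem connected_of_small (hcop : Nat.Coprime n p) (X : Set (nonIso (Gnp n p)))
    (hX : X.ncard < n.totient * (p ^ 2 - p)) :
    ((deltaGraph (Gnp n p)).induce Xᶜ).Connected := by
  set H := (deltaGraph (Gnp n p)).induce Xᶜ with hH
  have hadjH : ∀ a b : ↥Xᶜ, (deltaGraph (Gnp n p)).Adj a.val b.val → H.Adj a b := by
    intro a b hab
    exact hab
  -- step 1 : every vertex has a "good" neighbor outside X
  have step1 : ∀ a : ↥Xᶜ, ∃ b : ↥Xᶜ, H.Adj a b ∧ IsUnit (xc b.val.val) := by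
    intro a
    obtain ⟨z, hz1, hz2, hz3⟩ := exists_good n p hcop X hX a.val
    exact ⟨⟨z, hz3⟩, hadjH _ _ (adj_of_good n p hcop a.val z hz1 hz2), hz1⟩
  -- step 2 : two "good" vertices are reachable
  have step2 : ∀ a b : ↥Xᶜ, IsUnit (xc a.val.val) → IsUnit (xc b.val.val) →
      H.Reachable a b := by
    intro a b ha hb
    by_cases hv : vc b.val.val ∈ Submodule.span (ZMod p) {vc a.val.val}
    · obtain ⟨z, hz1, hz2, hz3⟩ := exists_good n p hcop X hX a.val
      have hzb : vc z.val ∉ Submodule.span (ZMod p) {vc b.val.val} := by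
        intro hmem
        apply hz2
        have hle : Submodule.span (ZMod p) {vc b.val.val} ≤
            Submodule.span (ZMod p) {vc a.val.val} :=
          (Submodule.span_singleton_le_iff_mem _ _).mpr hv
        exact hle hmem
      have h1 : H.Adj a ⟨z, hz3⟩ := hadjH _ _ (adj_of_good n p hcop a.val z hz1 hz2)
      have h2 : H.Adj b ⟨z, hz3⟩ := hadjH _ _ (adj_of_good n p hcop b.val z hz1 hzb)
      exact h1.reachable.trans h2.reachable.symm
    · exact (hadjH _ _ (adj_of_good n p hcop a.val b.val hb hv)).reachable
  have hne : Nonempty ↥Xᶜ := by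
    obtain ⟨z, _, _, hz3⟩ := exists_good n p hcop X hX (u₀ n p hcop)
    exact ⟨⟨z, hz3⟩⟩
  rw [SimpleGraph.connected_iff]
  refine ⟨fun a b => ?_, hne⟩
  obtain ⟨a', haa, ha'⟩ := step1 a
  obtain ⟨b', hbb, hb'⟩ := step1 b
  exact (haa.reachable.trans (step2 a' b' ha' hb')).trans hbb.reachable.symm

end Conn

section Final
open scoped Classical
variable (n p : ℕ) [NeZero n] [Fact p.Prime]

theorem card_nonIso (hcop : Nat.Coprime n p) :
    Nat.card (nonIso (Gnp n p)) = n * (p ^ 2 - 1) := by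
  have hcc := card_cond n p (fun _ => True) (fun w => w ≠ 0)
  have hset : nonIso (Gnp n p) = {g : Gnp n p | True ∧ vc g ≠ 0} := by
    ext g
    rw [mem_nonIso_iff n p hcop]
    simp
  rw [Nat.card_congr (Equiv.setCongr hset), hcc]
  have h1 : Nat.card {y : ZMod n | True} = n := by
    rw [show {y : ZMod n | True} = Set.univ from rfl, Nat.card_coe_set_eq,
      Set.ncard_univ, Nat.card_zmod]
  have h2 : Nat.card {w : Vp p | w ≠ 0} = p ^ 2 - 1 := by
    have : {w : Vp p | w ≠ 0} = ({0} : Set (Vp p))ᶜ := rfl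
    have hc := Set.ncard_add_ncard_compl ({0} : Set (Vp p))
    rw [Set.ncard_singleton, card_Vp] at hc
    rw [this, Nat.card_coe_set_eq]
    omega
  rw [h1, h2]

theorem zmod2_cases : ∀ (c : ZMod 2), c = 0 ∨ c = 1 := by decide

theorem delta_eq_top (hcop : Nat.Coprime n p) (h1 : n = 1) (h2 : p = 2) :
    deltaGraph (Gnp n p) = ⊤ := by
  subst h1 h2
  ext u z
  rw [SimpleGraph.top_adj]
  constructor
  · exact fun h => h.ne
  · intro hne
    rw [deltaAdj_iff 1 2 hcop]
    haveI : Subsingleton (ZMod 1) := by infer_instance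
    constructor
    · exact Subsingleton.elim _ _
    · intro hmem
      obtain ⟨c, hc⟩ := Submodule.mem_span_singleton.mp hmem
      have hz : vc z.val ≠ 0 := (mem_nonIso_iff 1 2 hcop z.val).mp z.prop
      have hvne : vc z.val ≠ vc u.val := by
        intro he
        exact hne (Subtype.ext (gnp_ext (Subsingleton.elim _ _) he)).symm
      rcases zmod2_cases c with rfl | rfl
      · rw [zero_smul] at hc
        exact hz hc.symm
      · rw [one_smul] at hc
        exact hvne hc.symm

theorem exists_u₁ (hcop : Nat.Coprime n p) (h : ¬(n = 1 ∧ p = 2)) :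
    ∃ u₁ : nonIso (Gnp n p), u₁ ≠ u₀ n p hcop ∧
      ¬ (deltaGraph (Gnp n p)).Adj (u₀ n p hcop) u₁ := by
  haveI : Fact (1 < p) := ⟨(Fact.out : p.Prime).one_lt⟩
  by_cases hp : p = 2
  · -- n ≠ 1, use (0,(0,1))
    have hn : n ≠ 1 := fun h1 => h ⟨h1, hp⟩
    haveI : Fact (1 < n) := ⟨by have := (NeZero.ne n); omega⟩
    have hone : (1 : ZMod p) ≠ 0 := one_ne_zero
    refine ⟨⟨Multiplicative.ofAdd ((0 : ZMod n), ((0 : ZMod p), (1 : ZMod p))), ?_⟩, ?_, ?_⟩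
    · rw [mem_nonIso_iff n p hcop]
      exact fun he => hone (congrArg Prod.snd he)
    · intro he
      have h' : ((0 : ZMod p), (1 : ZMod p)) = ((1 : ZMod p), (0 : ZMod p)) :=
        congrArg (fun u : nonIso (Gnp n p) => vc u.val) he
      exact hone (congrArg Prod.snd h')
    · intro hadj
      rw [deltaAdj_iff n p hcop] at hadj
      have h0 : xc (u₀ n p hcop).val = 0 := rfl
      have h0' : xc (Multiplicative.ofAdd
        ((0 : ZMod n), ((0 : ZMod p), (1 : ZMod p))) : Gnp n p) = 0 := rfl
      have := hadj.1
      rw [h0, h0'] at this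
      have : IsUnit (0 : ZMod n) := (closure_pair_zero_iff n 0).mp this
      rw [isUnit_zero_iff] at this
      exact zero_ne_one this
  · -- p > 2, use (0,(2,0))
    have hp2 : 2 < p := by
      have := (Fact.out : p.Prime).two_le
      omega
    have h2ne : (2 : ZMod p) ≠ 0 := by
      intro he
      have : (p : ℕ) ∣ 2 := by
        have := (ZMod.natCast_eq_zero_iff 2 p).mp (by exact_mod_cast he)
        exact this
      have := Nat.le_of_dvd (by norm_num) this
      omega
    have h21 : (2 : ZMod p) ≠ 1 := by
      intro he
      have : ((1 : ℕ) : ZMod p) = 0 := by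
        push_cast
        have : (2 : ZMod p) - 1 = 0 := by rw [he]; ring
        calc (1 : ZMod p) = 2 - 1 := by ring
        _ = 0 := this
      rw [ZMod.natCast_eq_zero_iff] at this
      have := Nat.le_of_dvd (by norm_num) this
      omega
    refine ⟨⟨Multiplicative.ofAdd ((0 : ZMod n), ((2 : ZMod p), (0 : ZMod p))), ?_⟩, ?_, ?_⟩
    · rw [mem_nonIso_iff n p hcop]
      exact fun he => h2ne (congrArg Prod.fst he)
    · intro he
      have : ((2 : ZMod p), (0 : ZMod p)) = ((1 : ZMod p), (0 : ZMod p)) :=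
        congrArg (fun u : nonIso (Gnp n p) => vc u.val) he
      exact h21 (congrArg Prod.fst this)
    · intro hadj
      rw [deltaAdj_iff n p hcop] at hadj
      apply hadj.2
      refine Submodule.mem_span_singleton.mpr ⟨2, ?_⟩
      show (2 : ZMod p) • (((1 : ZMod p), (0 : ZMod p)) : Vp p) = _
      refine Prod.ext ?_ ?_
      · show (2 : ZMod p) * 1 = 2
        ring
      · show (2 : ZMod p) * 0 = 0
        ring

theorem cut_mem (hcop : Nat.Coprime n p) (h : ¬(n = 1 ∧ p = 2)) :
    ∃ X : Set (nonIso (Gnp n p)), X.ncard = n.totient * (p ^ 2 - p) ∧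
      ¬ ((deltaGraph (Gnp n p)).induce Xᶜ).Connected := by
  obtain ⟨u₁, hu1ne, hu1adj⟩ := exists_u₁ n p hcop h
  refine ⟨(deltaGraph (Gnp n p)).neighborSet (u₀ n p hcop), ?_, ?_⟩
  · rw [← Nat.card_coe_set_eq, card_neighborSet n p hcop]
    have h0 : xc (u₀ n p hcop).val = 0 := rfl
    rw [h0, card_T1_zero]
  · intro hc
    have h0mem : u₀ n p hcop ∈ ((deltaGraph (Gnp n p)).neighborSet (u₀ n p hcop))ᶜ :=
      fun hmem => (deltaGraph (Gnp n p)).irrefl hmem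
    have h1mem : u₁ ∈ ((deltaGraph (Gnp n p)).neighborSet (u₀ n p hcop))ᶜ :=
      fun hmem => hu1adj hmem
    obtain ⟨w⟩ := hc.preconnected ⟨u₀ n p hcop, h0mem⟩ ⟨u₁, h1mem⟩
    have hnevert : (⟨u₀ n p hcop, h0mem⟩ :
        ↥((deltaGraph (Gnp n p)).neighborSet (u₀ n p hcop))ᶜ) ≠ ⟨u₁, h1mem⟩ :=
      fun he => hu1ne (congrArg Subtype.val he).symm
    have hwn : ¬ w.Nil := SimpleGraph.Walk.not_nil_of_ne hnevert
    have hadj := w.adj_snd hwn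
    have : (deltaGraph (Gnp n p)).Adj (u₀ n p hcop) (w.getVert 1).val := hadj
    exact (w.getVert 1).prop this

theorem totient_card (hcop : Nat.Coprime n p) :
    Nat.totient (Nat.card (Gnp n p)) = n.totient * (p ^ 2 - p) := by
  have hcard : Nat.card (Gnp n p) = n * (p * p) := by
    have h0 : Nat.card (Gnp n p) = Nat.card (Ap n p) :=
      Nat.card_congr (Multiplicative.toAdd (α := Ap n p))
    rw [h0, Nat.card_prod, Nat.card_prod, Nat.card_zmod, Nat.card_zmod]
  rw [hcard, Nat.totient_mul (Nat.Coprime.mul_right hcop hcop),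
    show p * p = p ^ 2 from (sq p).symm,
    Nat.totient_prime_pow (Fact.out : p.Prime) (by norm_num : 0 < 2)]
  congr 1
  obtain ⟨q, rfl⟩ : ∃ q, p = q + 1 :=
    ⟨p - 1, by have := (Fact.out : p.Prime).pos; omega⟩
  simp only [show (2 : ℕ) - 1 = 1 from rfl, pow_one, Nat.add_sub_cancel]
  exact (Nat.sub_eq_of_eq_add (by ring : (q+1)^2 = (q+1) * q + (q+1))).symm

end Final

open scoped Classical in
/-- The vertex connectivity of a finite graph: the least number of vertices whose
removal disconnects the graph, with `κ(K_n) = n - 1`. -/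
noncomputable def vertexConnectivity {V : Type*} [Fintype V] (Γ : SimpleGraph V) : ℕ :=
  if Γ = ⊤ then Fintype.card V - 1
  else sInf {n | ∃ X : Set V, X.ncard = n ∧ ¬ (Γ.induce Xᶜ).Connected}

open scoped Classical in
theorem stmt_10 (n p : ℕ) [NeZero n] [Fact p.Prime] (hcop : Nat.Coprime n p) :
    vertexConnectivity (deltaGraph (Multiplicative (ZMod n × ZMod p × ZMod p)))
        = Nat.totient n * (p ^ 2 - p) ∧
    Nat.totient (Nat.card (Multiplicative (ZMod n × ZMod p × ZMod p)))
        = Nat.totient n * (p ^ 2 - p) ∧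
    (deltaGraph (Multiplicative (ZMod n × ZMod p × ZMod p))).minDegree
        = Nat.totient n * (p ^ 2 - p) := by
  refine ⟨?_, totient_card n p hcop, minDegree_eq n p hcop⟩
  by_cases hc : n = 1 ∧ p = 2
  · obtain ⟨h1, h2⟩ := hc
    subst h1 h2
    have htop : deltaGraph (Gnp 1 2) = ⊤ := delta_eq_top 1 2 hcop rfl rfl
    unfold vertexConnectivity
    rw [if_pos htop]
    have hcard : Fintype.card (nonIso (Gnp 1 2)) = 3 := by
      rw [← Nat.card_eq_fintype_card, card_nonIso 1 2 hcop]
      norm_num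
    rw [hcard]
    simp [Nat.totient_one]
  · have hne : deltaGraph (Gnp n p) ≠ ⊤ := by
      intro htop
      obtain ⟨u₁, hne1, hnadj⟩ := exists_u₁ n p hcop hc
      exact hnadj (htop ▸ ((SimpleGraph.top_adj (v := u₀ n p hcop) (w := u₁)).mpr hne1.symm))
    unfold vertexConnectivity
    rw [if_neg hne]
    apply le_antisymm
    · exact Nat.sInf_le (cut_mem n p hcop hc)
    · refine le_csInf ⟨_, cut_mem n p hcop hc⟩ ?_
      rintro m ⟨X, hX1, hX2⟩
      by_contra hlt
      push_neg at hlt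
      exact hX2 (connected_of_small n p hcop X (by omega))
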